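/- Suppose Ω is a Cantor group that admits a minimal ℤ^d action by translations {T^n}_{n∈ℤ^d}. Then the set of periodic elements is dense in C(Ω, ℝ) with the sup norm: for every continuous f̃ : Ω → ℝ and every ε > 0, there exist a continuous f : Ω → ℝ and p = (p_1,…,p_d) ∈ (ℤ₊)^d such that ‖f − f̃‖_∞ < ε and f(T^{p_j e_j} ω) = f(ω) for every ω ∈ Ω and every j ∈ {1,…,d} (where e_j is the j-th standard basis vector of ℤ^d); in particular f(T^p ω) = f(ω) for all ω ∈ Ω. -/

import Mathlib

open Filter Topology

/-- If `Ω` is a Cantor group admitting a minimal `ℤ^d` action by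
translations, then the periodic elements are dense in `C(Ω, ℝ)`: for every continuous
`f̃ : Ω → ℝ` and `ε > 0` there are a continuous `f` and `p ∈ (ℤ₊)^d` with `‖f − f̃‖ < ε`
and `f(T^{p_j e_j} ω) = f(ω)` for all `ω, j`; in particular `f(T^p ω) = f(ω)`. -/
theorem periodic_dense_in_continuous_functions (d : ℕ) (Ω : Type) [TopologicalSpace Ω]
    [AddCommGroup Ω] [IsTopologicalAddGroup Ω] [CompactSpace Ω] [TotallyDisconnectedSpace Ω]
    [TopologicalSpace.MetrizableSpace Ω] [Infinite Ω]
    (α : Fin d → Ω)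
    (hmin : ∀ ω : Ω, Dense (Set.range fun n : Fin d → ℤ => ω + ∑ j, n j • α j))
    (ftilde : C(Ω, ℝ)) (ε : ℝ) (hε : 0 < ε) :
    ∃ (f : C(Ω, ℝ)) (p : Fin d → ℤ),
      (∀ j, 0 < p j) ∧
      ‖f - ftilde‖ < ε ∧
      (∀ (ω : Ω) (j : Fin d), f (ω + p j • α j) = f ω) ∧
      (∀ ω : Ω, f (ω + ∑ j, p j • α j) = f ω) := by
  -- Set up the canonical uniform structure on Ω
  letI : UniformSpace Ω := IsTopologicalAddGroup.rightUniformSpace Ω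
  haveI : IsUniformAddGroup Ω := isUniformAddGroup_of_addCommGroup
  -- uniform continuity of ftilde
  have huc : UniformContinuous (ftilde : Ω → ℝ) :=
    CompactSpace.uniformContinuous_of_continuous ftilde.continuous
  have hent : {p : ℝ × ℝ | dist p.1 p.2 < ε / 2} ∈ uniformity ℝ :=
    Metric.dist_mem_uniformity (half_pos hε)
  have hU := huc hent
  rw [uniformity_eq_comap_nhds_zero Ω, Filter.mem_map, Filter.mem_comap] at hU
  obtain ⟨U, hU0, hUsub⟩ := hU
  -- find a clopen neighborhood of 0 inside U
  obtain ⟨V, hVclopen, hV0, hVU⟩ :=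
    compact_exists_isClopen_in_isOpen isOpen_interior (mem_interior_iff_mem_nhds.mpr hU0)
  -- find an open subgroup inside V
  obtain ⟨H, hHV⟩ :=
    IsTopologicalAddGroup.exist_openAddSubgroup_sub_clopen_nhds_of_zero hVclopen hV0
  set N : AddSubgroup Ω := H.toAddSubgroup with hN
  haveI : DiscreteTopology (Ω ⧸ N) := QuotientAddGroup.discreteTopology H.isOpen
  haveI : Finite (Ω ⧸ N) := AddSubgroup.quotient_finite_of_isOpen N H.isOpen
  set π : Ω →+ Ω ⧸ N := QuotientAddGroup.mk' N with hπ
  -- key : anything with the same image under π differs by an element of U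
  have hsame : ∀ x y : Ω, π x = π y → dist (ftilde x) (ftilde y) < ε / 2 := by
    intro x y hxy
    have hmem : -x + y ∈ N := QuotientAddGroup.eq.mp hxy
    have : y - x ∈ U := by
      have : y - x ∈ V := hHV (by rwa [neg_add_eq_sub] at hmem)
      exact interior_subset (hVU this)
    exact hUsub (show ((x, y).2 - (x, y).1) ∈ U from this)
  -- the approximating function
  have hcont : Continuous fun ω : Ω => ftilde (π ω).out := by
    have h1 : Continuous fun q : Ω ⧸ N => ftilde q.out := continuous_of_discreteTopology
    exact h1.comp continuous_quotient_mk'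
  refine ⟨⟨fun ω => ftilde (π ω).out, hcont⟩, fun j => (addOrderOf (π (α j)) : ℤ), ?_, ?_, ?_, ?_⟩
  · intro j
    show (0 : ℤ) < (addOrderOf (π (α j)) : ℤ)
    exact_mod_cast addOrderOf_pos (π (α j))
  · have hle : ‖(⟨fun ω => ftilde (π ω).out, hcont⟩ : C(Ω, ℝ)) - ftilde‖ ≤ ε / 2 := by
      apply ContinuousMap.norm_le _ (le_of_lt (half_pos hε)) |>.mpr
      intro ω
      have : π (π ω).out = π ω := by
        simp [hπ, QuotientAddGroup.mk'_apply, QuotientAddGroup.out_eq']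
      have := hsame _ _ this
      simpa [ContinuousMap.sub_apply, Real.dist_eq, abs_sub_comm] using le_of_lt this
    linarith [half_lt_self hε]
  · intro ω j
    have hmem : ((addOrderOf (π (α j)) : ℤ)) • α j ∈ N := by
      have : π (((addOrderOf (π (α j)) : ℤ)) • α j) = 0 := by
        rw [map_zsmul]
        norm_cast
        simp [addOrderOf_nsmul_eq_zero]
      exact (QuotientAddGroup.eq_zero_iff _).mp this
    have h0 : π ((addOrderOf (π (α j)) : ℤ) • α j) = 0 :=
      (QuotientAddGroup.eq_zero_iff _).mpr hmem
    have hpi : π (ω + (addOrderOf (π (α j)) : ℤ) • α j) = π ω := by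
      rw [map_add, h0, add_zero]
    simp only [ContinuousMap.coe_mk, hpi]
  · intro ω
    have hmem : ∀ j : Fin d, ((addOrderOf (π (α j)) : ℤ)) • α j ∈ N := by
      intro j
      have : π (((addOrderOf (π (α j)) : ℤ)) • α j) = 0 := by
        rw [map_zsmul]
        norm_cast
        simp [addOrderOf_nsmul_eq_zero]
      exact (QuotientAddGroup.eq_zero_iff _).mp this
    have hsum : (∑ j, ((addOrderOf (π (α j)) : ℤ)) • α j) ∈ N :=
      AddSubgroup.sum_mem N fun j _ => hmem j
    have h0 : π (∑ j, (addOrderOf (π (α j)) : ℤ) • α j) = 0 :=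
      (QuotientAddGroup.eq_zero_iff _).mpr hsum
    have hpi : π (ω + ∑ j, (addOrderOf (π (α j)) : ℤ) • α j) = π ω := by
      rw [map_add, h0, add_zero]
    simp only [ContinuousMap.coe_mk, hpi]
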